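/- Let q be a prime power and k a positive integer whose sum of base-q digits ℓ(k) satisfies ℓ(k) < q - 1. Then ∑_{θ∈F_q} (t+θ)^k = 0 in F_q[t]. -/

import Mathlib

open Polynomial

open Finset in
lemma aux_digsum_pos (q : ℕ) (hq : 2 ≤ q) : ∀ n, 0 < n → 0 < (Nat.digits q n).sum := by
  intro n
  induction n using Nat.strong_induction_on with
  | _ n ih =>
    intro hn
    rw [Nat.digits_def' (by omega : 1 < q) hn]
    simp only [List.sum_cons]
    rcases Nat.eq_zero_or_pos (n % q) with h | h
    · have hdvd : q ∣ n := Nat.dvd_of_mod_eq_zero h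
      have h1 : 0 < n / q := Nat.div_pos (Nat.le_of_dvd hn hdvd) (by omega)
      have h2 : n / q < n := Nat.div_lt_self hn (by omega)
      have := ih (n / q) h2 h1
      omega
    · omega

lemma aux_digsum_add (q : ℕ) (hq : 2 ≤ q) :
    ∀ n a c, a + c = n → (∀ i, a % q ^ i + c % q ^ i < q ^ i) →
    (Nat.digits q (a + c)).sum = (Nat.digits q a).sum + (Nat.digits q c).sum := by
  intro n
  induction n using Nat.strong_induction_on with
  | _ n ih =>
    intro a c hac h
    rcases Nat.eq_zero_or_pos a with rfl | ha
    · simp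
    rcases Nat.eq_zero_or_pos c with rfl | hc
    · simp
    have h1 := h 1
    rw [pow_one] at h1
    have hq0 : 0 < q := by omega
    have hmod : (a + c) % q = a % q + c % q := by
      rw [Nat.add_mod, Nat.mod_eq_of_lt h1]
    have hdiv : (a + c) / q = a / q + c / q := by
      rw [Nat.add_div hq0]
      simp [if_neg (not_le.2 h1)]
    have hpos : 0 < a + c := by omega
    rw [Nat.digits_def' (by omega : 1 < q) hpos, List.sum_cons, hmod, hdiv]
    have hrec : ∀ i, a / q % q ^ i + c / q % q ^ i < q ^ i := by
      intro i
      have hi := h (i + 1)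
      have e1 : a / q % q ^ i = a % q ^ (i + 1) / q := by
        rw [pow_succ', Nat.mod_mul_right_div_self]
      have e2 : c / q % q ^ i = c % q ^ (i + 1) / q := by
        rw [pow_succ', Nat.mod_mul_right_div_self]
      rw [e1, e2]
      have hle : a % q ^ (i + 1) / q + c % q ^ (i + 1) / q ≤
          (a % q ^ (i + 1) + c % q ^ (i + 1)) / q := Nat.add_div_le_add_div _ _ _
      have hlt : (a % q ^ (i + 1) + c % q ^ (i + 1)) / q < q ^ i := by
        rw [Nat.div_lt_iff_lt_mul hq0]
        calc a % q ^ (i + 1) + c % q ^ (i + 1) < q ^ (i + 1) := hi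
          _ = q ^ i * q := by ring
      omega
    have hlt : a / q + c / q < n := by
      have : a / q ≤ a := Nat.div_le_self a q
      have : c / q < c := Nat.div_lt_self hc (by omega)
      have : a / q ≤ a := Nat.div_le_self a q
      omega
    have := ih (a / q + c / q) hlt (a / q) (c / q) rfl hrec
    rw [this]
    rw [Nat.digits_def' (by omega : 1 < q) ha, Nat.digits_def' (by omega : 1 < q) hc]
    simp only [List.sum_cons]
    omega

open Finset in
lemma aux_kummer (p : ℕ) (hp : p.Prime) {k j : ℕ} (hjk : j ≤ k)
    (h : ¬ p ∣ k.choose j) (i : ℕ) : j % p ^ i + (k - j) % p ^ i < p ^ i := by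
  rcases Nat.eq_zero_or_pos i with rfl | hi
  · simp [Nat.mod_one]
  set b := max (Nat.log p k + 1) (i + 1) with hb
  have hlog : Nat.log p k < b := by omega
  have hmul := Nat.Prime.emultiplicity_choose hp hjk hlog
  have hz : emultiplicity p (k.choose j) = 0 := emultiplicity_eq_zero.2 h
  rw [hz] at hmul
  have hcard : #{x ∈ Ico 1 b | p ^ x ≤ j % p ^ x + (k - j) % p ^ x} = 0 := by
    exact_mod_cast hmul.symm
  rw [Finset.card_eq_zero, Finset.filter_eq_empty_iff] at hcard
  have := hcard (show i ∈ Ico 1 b by simp [Finset.mem_Ico]; omega)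
  omega

open Finset in
lemma aux_sum_pow (K : Type) [Field K] [Fintype K] (i : ℕ) (h0 : i ≠ 0)
    (h : ¬ (Fintype.card K - 1) ∣ i) : ∑ x : K, x ^ i = 0 := by
  classical
  let φ : Kˣ ↪ K := ⟨fun x ↦ x, Units.val_injective⟩
  have huniv : univ.map φ = univ \ {0} := by
    ext x
    simpa only [mem_map, mem_univ, Function.Embedding.coeFn_mk, true_and, mem_sdiff,
      mem_singleton, φ, IsUnit] using isUnit_iff_ne_zero
  calc
    ∑ x : K, x ^ i = ∑ x ∈ univ \ {(0 : K)}, x ^ i := by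
      rw [← sum_sdiff ({0} : Finset K).subset_univ, sum_singleton, zero_pow h0, add_zero]
    _ = ∑ x : Kˣ, (x ^ i : K) := by simp [φ, ← huniv, univ.sum_map φ]
    _ = 0 := by rw [FiniteField.sum_pow_units K i, if_neg h]

/-- If the base-`q` digit sum of `k ≥ 1` is `< q-1`, then
`∑_{θ∈F_q} (t+θ)^k = 0` in `F_q[t]`. -/
theorem stmt_14 (p s q : ℕ) (hp : p.Prime) (hs : 0 < s) (hq : q = p ^ s)
    {F : Type} [Field F] [Fintype F] (hF : Fintype.card F = q)
    (k : ℕ) (hk : 1 ≤ k) (hdig : (Nat.digits q k).sum < q - 1) :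
    (∑ θ : F, (X + C θ) ^ k) = (0 : F[X]) := by
  classical
  have hq2 : 2 ≤ q := hq ▸ Nat.one_lt_pow hs.ne' hp.one_lt
  -- q = 2 is impossible
  have hq3 : 3 ≤ q := by
    rcases Nat.lt_or_ge q 3 with h | h
    · interval_cases q
      · have := aux_digsum_pos 2 (by omega) k hk
        omega
    · exact h
  -- characteristic of F is p
  have hmod1 : q % (q - 1) = 1 := by
    rw [Nat.mod_eq_sub_mod (by omega), show q - (q - 1) = 1 by omega]
    exact Nat.mod_eq_of_lt (by omega)
  have hcharp : CharP F p := by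
    obtain ⟨n, hrp, hcard⟩ := FiniteField.card F (ringChar F)
    have hdvd : ringChar F ∣ p ^ s := by
      rw [← hq, ← hF, hcard]
      exact dvd_pow_self _ (by exact_mod_cast n.pos.ne')
    have : ringChar F = p :=
      (Nat.prime_dvd_prime_iff_eq hrp hp).1 (hrp.dvd_of_dvd_pow hdvd)
    exact this ▸ ringChar.charP F
  have hcast : ∀ m : ℕ, p ∣ m → (m : F) = 0 := by
    intro m hm
    exact (CharP.cast_eq_zero_iff F p m).2 hm
  -- main computation
  have key : ∀ m ∈ Finset.range (k + 1),
      (∑ θ : F, X ^ m * C θ ^ (k - m) * (k.choose m : F[X])) = 0 := by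
    intro m hm
    rw [Finset.mem_range] at hm
    have hmk : m ≤ k := by omega
    rcases eq_or_lt_of_le hmk with rfl | hmk'
    · -- m = k : sum of constants, card = 0 in F
      simp only [Nat.sub_self, pow_zero, mul_one, Nat.choose_self, Nat.cast_one,
        Finset.sum_const, Finset.card_univ, hF]
      have hq0 : ((q : ℕ) : F) = 0 := by rw [← hF]; exact FiniteField.cast_card_eq_zero F
      rw [nsmul_eq_mul, show ((q : ℕ) : F[X]) = C ((q : ℕ) : F) by simp, hq0, map_zero, zero_mul]
    · by_cases hdvd : p ∣ k.choose m
      · have : ((k.choose m : ℕ) : F[X]) = 0 := by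
          rw [← C_eq_natCast, hcast _ hdvd, map_zero]
        simp [this]
      · -- theta sum vanishes
        have hcarry : ∀ i, m % q ^ i + (k - m) % q ^ i < q ^ i := by
          intro i
          rw [hq, ← pow_mul]
          exact aux_kummer p hp hmk hdvd (s * i)
        have hsum_eq : (Nat.digits q m).sum + (Nat.digits q (k - m)).sum
            = (Nat.digits q k).sum := by
          have := aux_digsum_add q hq2 k m (k - m) (by omega) hcarry
          rw [show m + (k - m) = k by omega] at this
          omega
        have hpos : 0 < (Nat.digits q (k - m)).sum :=
          aux_digsum_pos q hq2 _ (by omega)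
        have hndvd : ¬ (q - 1) ∣ (k - m) := by
          intro hdd
          have hmodeq : (k - m) ≡ (Nat.digits q (k - m)).sum [MOD q - 1] :=
            Nat.modEq_digits_sum (q - 1) q hmod1 (k - m)
          have : (q - 1) ∣ (Nat.digits q (k - m)).sum :=
            (Nat.modEq_zero_iff_dvd).1 ((hmodeq.symm.trans (Nat.modEq_zero_iff_dvd.2 hdd)))
          have := Nat.le_of_dvd hpos this
          omega
        have hzero : ∑ θ : F, θ ^ (k - m) = 0 := by
          apply aux_sum_pow F _ (by omega)
          rw [hF]; exact hndvd
        calc ∑ θ : F, X ^ m * C θ ^ (k - m) * (k.choose m : F[X])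
            = X ^ m * C (∑ θ : F, θ ^ (k - m)) * (k.choose m : F[X]) := by
              rw [← Finset.sum_mul, ← Finset.mul_sum, map_sum]
              simp_rw [C_pow]
          _ = 0 := by rw [hzero, map_zero, mul_zero, zero_mul]
  calc ∑ θ : F, (X + C θ) ^ k
      = ∑ θ : F, ∑ m ∈ Finset.range (k + 1), X ^ m * C θ ^ (k - m) * (k.choose m : F[X]) := by
        simp_rw [add_pow]
    _ = ∑ m ∈ Finset.range (k + 1), ∑ θ : F, X ^ m * C θ ^ (k - m) * (k.choose m : F[X]) :=
        Finset.sum_comm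
    _ = 0 := Finset.sum_eq_zero key
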